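/- arXiv:2412.20177 — 5 statements merged into one kernel-verified Lean document; each statement's English description precedes it below -/
import Mathlib

section
/- (Lemma 3 of the paper, correctness of MaxGrowth.) Let S = [CL₁, …, CLₙ] be a feasible sequence with n ≥ k. Then ⟨λ(S), [CL₁.c, …, CLₙ.c]⟩ is a relaxed co-movement pattern satisfying all four parameters m, k, d, and ε: |λ(S)| ≥ m, the route has length n ≥ k, λ(S) is ε-close at every camera of the route (via the positions pᵢ), and the route is a d-subpath of the travel path of every object of λ(S) (witnessed by the strictly increasing positions pᵢ(o) with gaps at most d + 1). -/
/-- A cluster: a finite set of objects, a camera, and a position map. -/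
structure Cluster (ι C : Type*) where
  O : Finset ι
  c : C
  p : ι → ℕ

variable {ι C : Type*}

/-- `CL` is a valid cluster w.r.t. parameters `m`, `ε` and the travel-path data
(`len` = path lengths, `cam` = camera maps, `s` = entrance timestamps). -/
def IsCluster (m : ℕ) (ε : ℝ) (len : ι → ℕ) (cam : ι → ℕ → C) (s : ι → ℕ → ℝ)
    (CL : Cluster ι C) : Prop :=
  m ≤ CL.O.card ∧
  (∀ o ∈ CL.O, CL.p o < len o ∧ cam o (CL.p o) = CL.c) ∧
  (∀ o ∈ CL.O, ∀ o' ∈ CL.O, |s o (CL.p o) - s o' (CL.p o')| ≤ ε)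

/-- `o` is a core object of the cluster sequence `S` (gap tolerance `d`). -/
def IsCore (d : ℕ) (S : List (Cluster ι C)) (o : ι) : Prop :=
  (∀ CL ∈ S, o ∈ CL.O) ∧
  S.Chain' fun CL CL' => 0 < CL'.p o - CL.p o ∧ CL'.p o - CL.p o ≤ d + 1

/-- `λ(S)`: the set of core objects of the cluster sequence `S`. -/
def coreSet (d : ℕ) (S : List (Cluster ι C)) : Set ι := {o | IsCore d S o}

/-- `CL` is a feasible cluster for the cluster sequence `S`: at least `m` objects
belong to `CL.O`, are core objects of `S`, and reach `CL` from the last cluster of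
`S` within gap tolerance `d`. -/
def FeasibleFor (m d : ℕ) (S : List (Cluster ι C)) (CL : Cluster ι C) : Prop :=
  ∃ CLn ∈ S.getLast?, ∃ T : Finset ι, m ≤ T.card ∧
    ∀ o ∈ T, o ∈ CL.O ∧ o ∈ coreSet d S ∧
      0 < CL.p o - CLn.p o ∧ CL.p o - CLn.p o ≤ d + 1

/-- `S` is a feasible sequence: it consists of a single cluster, or its last cluster
is a feasible cluster for the preceding prefix. -/
def FeasibleSeq (m d : ℕ) (S : List (Cluster ι C)) : Prop :=
  (∃ CL, S = [CL]) ∨ (∃ S' CL, S = S' ++ [CL] ∧ FeasibleFor m d S' CL)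

/-- `⟨O, P⟩` is a relaxed co-movement pattern (VPlatoon) for parameters `m`, `k`,
`d`, `ε`: `O` is a finite set of at least `m` objects, `P` has length at least `k`,
and there are witnessing positions `q` making `P` a `d`-subpath of every member's
travel path along which `O` is `ε`-close. -/
def IsPattern (m k d : ℕ) (ε : ℝ) (len : ι → ℕ) (cam : ι → ℕ → C) (s : ι → ℕ → ℝ)
    (O : Set ι) (P : List C) : Prop :=
  O.Finite ∧ m ≤ O.ncard ∧ k ≤ P.length ∧
  ∃ q : ι → ℕ → ℕ,
    (∀ o ∈ O, ∀ t : ℕ, (ht : t < P.length) → q o t < len o ∧ cam o (q o t) = P[t]) ∧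
    (∀ o ∈ O, ∀ t : ℕ, t + 1 < P.length →
      q o t < q o (t + 1) ∧ q o (t + 1) - q o t ≤ d + 1) ∧
    (∀ t : ℕ, t < P.length → ∀ o ∈ O, ∀ o' ∈ O, |s o (q o t) - s o' (q o' t)| ≤ ε)

/-- `P₁` is a `d`-subpath of `P₂` (as camera sequences): there is a strictly
increasing position map with consecutive gaps at most `d + 1` matching cameras. -/
def IsDSubpath (d : ℕ) (P₁ P₂ : List C) : Prop :=
  ∃ g : ℕ → ℕ,
    (∀ t : ℕ, (ht : t < P₁.length) → ∃ h : g t < P₂.length, P₁[t] = P₂[g t]) ∧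
    (∀ t : ℕ, t + 1 < P₁.length → g t < g (t + 1) ∧ g (t + 1) - g t ≤ d + 1)

/-- Lemma 3 of the paper (correctness of MaxGrowth): for a feasible sequence
`S = [CL₁, …, CLₙ]` of valid clusters with `n ≥ k`, the pair
`⟨λ(S), [CL₁.c, …, CLₙ.c]⟩` is a relaxed co-movement pattern satisfying all
four parameters `m`, `k`, `d` and `ε`. -/
theorem maxGrowth_correct {ι C : Type*} (m k d : ℕ) (ε : ℝ) (hε : 0 ≤ ε)
    (len : ι → ℕ) (cam : ι → ℕ → C) (s : ι → ℕ → ℝ)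
    (hs : ∀ (o : ι) (i j : ℕ), i < j → j < len o → s o i < s o j)
    (S : List (Cluster ι C))
    (hvalid : ∀ CL ∈ S, IsCluster m ε len cam s CL)
    (hfeas : FeasibleSeq m d S) (hk : k ≤ S.length) :
    IsPattern m k d ε len cam s (coreSet d S) (S.map Cluster.c) := by

  obtain ⟨CL0, hCL0⟩ : ∃ CL0, CL0 ∈ S := by
    rcases hfeas with ⟨CL, rfl⟩ | ⟨S', CL, rfl, _⟩
    · exact ⟨CL, by simp⟩
    · exact ⟨CL, by simp⟩
  have hsub : coreSet d S ⊆ ↑CL0.O := fun o ho => ho.1 CL0 hCL0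
  have hfin : (coreSet d S).Finite := Set.Finite.subset CL0.O.finite_toSet hsub
  have hm : m ≤ (coreSet d S).ncard := by
    rcases hfeas with ⟨CL, rfl⟩ | ⟨S', CL, rfl, hF⟩
    · have h1 : (↑CL.O : Set ι) ⊆ coreSet d [CL] := by
        intro o ho
        refine ⟨fun CL' h => ?_, List.isChain_singleton _⟩
        simp only [List.mem_singleton] at h; subst h; exact ho
      calc m ≤ CL.O.card := (hvalid CL (by simp)).1
        _ = (↑CL.O : Set ι).ncard := (Set.ncard_coe_finset _).symm
        _ ≤ _ := Set.ncard_le_ncard h1 hfin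
    · obtain ⟨CLn, hCLn, T, hT, hTall⟩ := hF
      have h1 : (↑T : Set ι) ⊆ coreSet d (S' ++ [CL]) := by
        intro o ho
        simp only [Finset.mem_coe] at ho
        obtain ⟨hoCL, hocore, hgap1, hgap2⟩ := hTall o ho
        refine ⟨fun CL' h => ?_, ?_⟩
        · rcases List.mem_append.mp h with h | h
          · exact hocore.1 CL' h
          · simp only [List.mem_singleton] at h; subst h; exact hoCL
        · refine List.isChain_append.mpr ?_
          refine ⟨hocore.2, List.isChain_singleton _, ?_⟩
          intro x hx y hy
          simp only [Option.mem_def] at hCLn hx hy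
          rw [hCLn] at hx
          simp only [List.head?_cons, Option.some.injEq] at hy
          cases Option.some.inj hx
          cases hy
          exact ⟨hgap1, hgap2⟩
      calc m ≤ T.card := hT
        _ = (↑T : Set ι).ncard := (Set.ncard_coe_finset _).symm
        _ ≤ _ := Set.ncard_le_ncard h1 hfin
  refine ⟨hfin, hm, by simpa using hk, fun o t => (S.getD t CL0).p o, ?_, ?_, ?_⟩
  · intro o ho t ht
    simp only [List.length_map] at ht
    have hget : S.getD t CL0 = S[t] := List.getD_eq_getElem S CL0 ht
    have hmem : S[t] ∈ S := List.getElem_mem ht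
    have hoO : o ∈ (S[t]).O := ho.1 _ hmem
    obtain ⟨h1, h2⟩ := (hvalid _ hmem).2.1 o hoO
    simp only []
    rw [hget]
    exact ⟨h1, by rw [h2, List.getElem_map]⟩
  · intro o ho t ht
    simp only [List.length_map] at ht
    have h1 : S.getD t CL0 = S[t] := List.getD_eq_getElem S CL0 (by omega)
    have h2 : S.getD (t+1) CL0 = S[t+1] := List.getD_eq_getElem S CL0 ht
    have hc := List.isChain_iff_getElem.mp ho.2 t (by omega)
    simp only []
    rw [h1, h2]
    omega
  · intro t ht o ho o' ho'
    simp only [List.length_map] at ht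
    have hget : S.getD t CL0 = S[t] := List.getD_eq_getElem S CL0 ht
    have hmem : S[t] ∈ S := List.getElem_mem ht
    simp only []
    rw [hget]
    exact (hvalid _ hmem).2.2 o (ho.1 _ hmem) o' (ho'.1 _ hmem)
end

section
/- (Lemma 4 of the paper, completeness of MaxGrowth.) Let ⟨O, P⟩ with P = [c₁, …, cₙ] be a relaxed co-movement pattern, witnessed by positions q₁(o) < ⋯ < qₙ(o) for each o ∈ O. Then there exists a cluster sequence S = [CL₁, …, CLₙ] such that for each t, CLₜ.c = cₜ and O ⊆ CLₜ.O, every nonempty prefix of S is a feasible sequence, and O ⊆ λ(S). (In fact one may take CLₜ = (O, cₜ, qₜ): each such triple is a cluster, each prefix [CL₁, …, CLₜ] is a feasible sequence, and every object of O is a core object of S.) -/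
variable {ι C : Type*}

/-- Lemma 4 of the paper (completeness of MaxGrowth): for every relaxed
co-movement pattern `⟨O, P⟩` there exists a cluster sequence `S` of valid
clusters whose camera route equals `P`, with `O` contained in every cluster's
object set, every nonempty prefix of `S` a feasible sequence, and `O ⊆ λ(S)`. -/
theorem maxGrowth_complete {ι C : Type*} (m k d : ℕ) (ε : ℝ) (hε : 0 ≤ ε)
    (len : ι → ℕ) (cam : ι → ℕ → C) (s : ι → ℕ → ℝ)
    (hs : ∀ (o : ι) (i j : ℕ), i < j → j < len o → s o i < s o j)
    (O : Set ι) (P : List C)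
    (hpat : IsPattern m k d ε len cam s O P) :
    ∃ S : List (Cluster ι C),
      S.map Cluster.c = P ∧
      (∀ CL ∈ S, IsCluster m ε len cam s CL) ∧
      (∀ CL ∈ S, O ⊆ (CL.O : Set ι)) ∧
      (∀ S₁ : List (Cluster ι C), S₁ ≠ [] → S₁ <+: S → FeasibleSeq m d S₁) ∧
      O ⊆ coreSet d S := by
  obtain ⟨hfin, hm, hk, q, hq1, hq2, hq3⟩ := hpat
  classical
  set n := P.length with hn
  set f : Fin n → Cluster ι C := fun t => ⟨hfin.toFinset, P[(t : ℕ)], fun o => q o t⟩ with hf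
  set S : List (Cluster ι C) := List.ofFn f with hS
  have hlenS : S.length = n := by simp [hS]
  have hgetS : ∀ (i : ℕ) (hi : i < n), S[i]? = some (f ⟨i, hi⟩) := by
    intro i hi
    have hi' : i < S.length := by omega
    rw [List.getElem?_eq_getElem hi']
    simp [hS, List.getElem_ofFn]
  have hmem : ∀ CL ∈ S, ∃ i : Fin n, CL = f i := by
    intro CL hCL
    rw [hS, List.mem_ofFn] at hCL
    obtain ⟨i, hi⟩ := hCL
    exact ⟨i, hi.symm⟩
  have hcard : m ≤ hfin.toFinset.card := by
    rwa [Set.ncard_eq_toFinset_card O hfin] at hm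
  have hOsub : ∀ CL ∈ S, O ⊆ (CL.O : Set ι) := by
    intro CL hCL o ho
    obtain ⟨i, rfl⟩ := hmem CL hCL
    simpa [hf] using ho
  -- core objects of any prefix of S
  have hcore : ∀ S₁, S₁ <+: S → ∀ o ∈ O, IsCore d S₁ o := by
    intro S₁ hpre o ho
    have hchain : S.Chain' fun CL CL' => 0 < CL'.p o - CL.p o ∧ CL'.p o - CL.p o ≤ d + 1 := by
      rw [List.Chain', List.isChain_iff_getElem]
      intro i hi
      rw [hlenS] at hi
      have h1 : i < n := by omega
      have h2 : i + 1 < n := by omega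
      have := hq2 o ho i h2
      simp only [List.get_eq_getElem, hS, List.getElem_ofFn, hf]
      exact ⟨Nat.sub_pos_of_lt this.1, this.2⟩
    refine ⟨?_, hchain.prefix hpre⟩
    intro CL hCL
    have := hOsub CL (hpre.subset hCL) ho
    simpa using this
  refine ⟨S, ?_, ?_, hOsub, ?_, fun o ho => hcore S List.prefix_rfl o ho⟩
  · rw [hS, List.map_ofFn]
    have : (Cluster.c ∘ f) = fun i : Fin n => P[(i : ℕ)] := by
      funext i; simp [hf]
    rw [this, List.ofFn_getElem]
  · intro CL hCL
    obtain ⟨i, rfl⟩ := hmem CL hCL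
    refine ⟨hcard, ?_, ?_⟩
    · intro o ho
      simp only [hf, Set.Finite.mem_toFinset] at ho ⊢
      exact hq1 o ho i i.isLt
    · intro o ho o' ho'
      simp only [hf, Set.Finite.mem_toFinset] at ho ho' ⊢
      exact hq3 i i.isLt o ho o' ho'
  · intro S₁ hne hpre
    have hlen1 : S₁.length ≤ n := by
      have := hpre.length_le; omega
    have heq : S₁ = S.take S₁.length := List.prefix_iff_eq_take.mp hpre
    match hL : S₁.length, hlen1 with
    | 0, _ => simp [hL] at hne; exact absurd (List.length_eq_zero_iff.mp hL) hne
    | 1, _ =>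
      left
      obtain ⟨a, ha⟩ := List.length_eq_one_iff.mp hL
      exact ⟨a, ha⟩
    | (t + 2), hlen1 =>
      right
      have ht1 : t + 1 < n := by omega
      have ht0 : t < n := by omega
      refine ⟨S.take (t + 1), f ⟨t + 1, ht1⟩, ?_, ?_⟩
      · rw [heq, hL, List.take_succ]
        congr 1
        rw [hgetS (t+1) ht1]
        rfl
      · have hlentake : (S.take (t+1)).length = t + 1 := by
          rw [List.length_take]; omega
        refine ⟨f ⟨t, ht0⟩, ?_, hfin.toFinset, hcard, ?_⟩
        · rw [List.getLast?_eq_getElem?, hlentake, Nat.add_sub_cancel, List.getElem?_take,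
            if_pos (Nat.lt_succ_self t), hgetS t ht0]
          simp
        · intro o ho
          rw [Set.Finite.mem_toFinset] at ho
          have hg := hq2 o ho t ht1
          refine ⟨?_, hcore _ (List.take_prefix _ _) o ho, ?_, ?_⟩
          · simpa [hf] using ho
          · simp only [hf]
            exact Nat.sub_pos_of_lt hg.1
          · simp only [hf]
            exact hg.2
end

section
/- (Theorem 1 of the paper: MaxGrowth generates both valid and complete relaxed co-movement patterns.) (Validity) For every feasible sequence S = [CL₁, …, CLₙ] with n ≥ k, the pair ⟨λ(S), [CL₁.c, …, CLₙ.c]⟩ is a relaxed co-movement pattern. (Completeness) Conversely, for every relaxed co-movement pattern ⟨O, P⟩ with P = [c₁, …, cₙ], there exists a feasible sequence S = [CL₁, …, CLₙ] of length n whose camera route equals P (CLₜ.c = cₜ for all t), such that O ⊆ λ(S) and ⟨λ(S), P⟩ is itself a relaxed co-movement pattern containing ⟨O, P⟩ object-wise. -/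
variable {ι C : Type*}

/-- Theorem 1 of the paper: MaxGrowth generates both valid and complete relaxed
co-movement patterns. (Validity) Every feasible sequence `S` of valid clusters
with length at least `k` yields the relaxed co-movement pattern
`⟨λ(S), route(S)⟩`. (Completeness) Every relaxed co-movement pattern `⟨O, P⟩`
arises from a feasible sequence `S` of valid clusters whose camera route equals
`P`, with `O ⊆ λ(S)` and `⟨λ(S), P⟩` itself a relaxed co-movement pattern
containing `⟨O, P⟩` object-wise. -/
theorem maxGrowth_valid_and_complete {ι C : Type*} (m k d : ℕ) (hk : 1 ≤ k)
    (ε : ℝ) (hε : 0 ≤ ε)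
    (len : ι → ℕ) (cam : ι → ℕ → C) (s : ι → ℕ → ℝ)
    (hs : ∀ (o : ι) (i j : ℕ), i < j → j < len o → s o i < s o j) :
    (∀ S : List (Cluster ι C),
      (∀ CL ∈ S, IsCluster m ε len cam s CL) →
      FeasibleSeq m d S → k ≤ S.length →
      IsPattern m k d ε len cam s (coreSet d S) (S.map Cluster.c)) ∧
    (∀ (O : Set ι) (P : List C), IsPattern m k d ε len cam s O P →
      ∃ S : List (Cluster ι C),
        (∀ CL ∈ S, IsCluster m ε len cam s CL) ∧
        FeasibleSeq m d S ∧
        S.map Cluster.c = P ∧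
        O ⊆ coreSet d S ∧
        IsPattern m k d ε len cam s (coreSet d S) P) := by
  constructor
  · -- Validity
    intro S hclus hfeas hkS
    have hSpos : 0 < S.length := by omega
    have hne : S ≠ [] := List.ne_nil_of_length_pos hSpos
    have hfin : (coreSet d S).Finite :=
      Set.Finite.subset (S.head hne).O.finite_toSet (fun o ho => ho.1 _ (List.head_mem hne))
    have hq : ∀ (o : ι) (t : ℕ) (ht : t < S.length),
        (S.getD t (S.head hne)).p o = (S[t]'ht).p o := by
      intro o t ht; rw [List.getD_eq_getElem]
    refine ⟨hfin, ?_, by simpa using hkS, fun o t => (S.getD t (S.head hne)).p o, ?_, ?_, ?_⟩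
    · rcases hfeas with ⟨CL, rfl⟩ | ⟨S', CL, rfl, CLn, hCLn, T, hT, hTmem⟩
      · have hsub : (CL.O : Set ι) ⊆ coreSet d [CL] := by
          intro o ho
          refine ⟨fun CL' h => ?_, List.isChain_singleton _⟩
          simp only [List.mem_singleton] at h
          subst h; exact ho
        calc m ≤ CL.O.card := (hclus CL (by simp)).1
          _ = (CL.O : Set ι).ncard := (Set.ncard_coe_finset _).symm
          _ ≤ _ := Set.ncard_le_ncard hsub hfin
      · have hsub : (T : Set ι) ⊆ coreSet d (S' ++ [CL]) := by
          intro o ho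
          obtain ⟨h1, ⟨h2, h3⟩, h4, h5⟩ := hTmem o ho
          refine ⟨?_, ?_⟩
          · intro CL' hCL'
            rcases List.mem_append.1 hCL' with h | h
            · exact h2 _ h
            · simp only [List.mem_singleton] at h; subst h; exact h1
          · rw [List.Chain', List.isChain_append]
            refine ⟨h3, List.isChain_singleton _, fun x hx y hy => ?_⟩
            simp only [List.head?_cons, Option.mem_some_iff] at hy
            subst hy
            have hx' : x = CLn := Option.mem_unique hx hCLn
            subst hx'
            exact ⟨h4, h5⟩
        calc m ≤ T.card := hT
          _ = (T : Set ι).ncard := (Set.ncard_coe_finset _).symm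
          _ ≤ _ := Set.ncard_le_ncard hsub hfin
    · intro o ho t ht
      simp only [List.length_map] at ht
      beta_reduce
      rw [hq o t ht]
      have hm := List.getElem_mem (l := S) (n := t) (by omega)
      obtain ⟨h1, h2⟩ := (hclus _ hm).2.1 o (ho.1 _ hm)
      refine ⟨h1, ?_⟩
      rw [h2, List.getElem_map]
    · intro o ho t ht
      simp only [List.length_map] at ht
      beta_reduce
      rw [hq o t (by omega), hq o (t+1) (by omega)]
      have hch := List.isChain_iff_getElem.1 ho.2 t (by omega)
      omega
    · intro t ht o ho o' ho'
      simp only [List.length_map] at ht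
      beta_reduce
      rw [hq o t ht, hq o' t ht]
      have hm := List.getElem_mem (l := S) (n := t) (by omega)
      exact (hclus _ hm).2.2 o (ho.1 _ hm) o' (ho'.1 _ hm)
  · -- Completeness
    intro O P hpat
    have hpat' := hpat
    obtain ⟨hfinO, hm, hkP, q, hq1, hq2, hq3⟩ := hpat'
    have hP : 0 < P.length := by omega
    set OF := hfinO.toFinset with hOF
    set F : Fin P.length → Cluster ι C := fun i => ⟨OF, P[i], fun o => q o i⟩ with hF
    set S := List.ofFn F with hS
    have hlen : S.length = P.length := by simp [hS]
    have hget : ∀ (i : ℕ) (h : i < P.length), S[i]'(by omega) = F ⟨i, h⟩ := by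
      intro i h; simp [hS]
    have hcard : m ≤ OF.card := by
      rwa [hOF, ← Set.ncard_eq_toFinset_card O hfinO]
    have hclus : ∀ CL ∈ S, IsCluster m ε len cam s CL := by
      intro CL hCL
      rw [hS, List.mem_ofFn] at hCL
      obtain ⟨i, rfl⟩ := hCL
      refine ⟨hcard, ?_, ?_⟩
      · intro o ho
        have hoO : o ∈ O := hfinO.mem_toFinset.1 ho
        exact hq1 o hoO i i.isLt
      · intro o ho o' ho'
        exact hq3 i i.isLt o (hfinO.mem_toFinset.1 ho) o' (hfinO.mem_toFinset.1 ho')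
    have hmap : S.map Cluster.c = P := by
      rw [hS, List.map_ofFn]
      exact List.ofFn_getElem
    have hOsub : ∀ o ∈ O, IsCore d S o := by
      intro o ho
      refine ⟨?_, ?_⟩
      · intro CL hCL
        rw [hS, List.mem_ofFn] at hCL
        obtain ⟨i, rfl⟩ := hCL
        exact hfinO.mem_toFinset.2 ho
      · rw [List.Chain', List.isChain_iff_getElem]
        intro i hi
        rw [hlen] at hi
        rw [hget i (by omega), hget (i+1) (by omega)]
        have hgap := hq2 o ho i (by omega)
        simp only [hF]
        omega
    have hcore : coreSet d S = O := by
      apply Set.Subset.antisymm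
      · intro o ho
        have h0 : (0:ℕ) < S.length := by omega
        have hmem := ho.1 (S[0]'h0) (List.getElem_mem h0)
        rw [hget 0 (by omega)] at hmem
        simp only [hF] at hmem
        exact hfinO.mem_toFinset.1 hmem
      · exact hOsub
    have hfeas : FeasibleSeq m d S := by
      rcases Nat.lt_or_ge P.length 2 with h2 | h2
      · left
        exact List.length_eq_one_iff.1 (by omega)
      · right
        have hne : S ≠ [] := List.ne_nil_of_length_pos (by omega)
        refine ⟨S.dropLast, S.getLast hne, (List.dropLast_append_getLast hne).symm, ?_⟩
        have hlen' : S.dropLast.length = P.length - 1 := by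
          rw [List.length_dropLast, hlen]
        have hne' : S.dropLast ≠ [] := List.ne_nil_of_length_pos (by omega)
        refine ⟨S.dropLast.getLast hne', ?_, OF, hcard, ?_⟩
        · rw [Option.mem_def, List.getLast?_eq_getLast hne']
        · intro o ho
          have hoO : o ∈ O := hfinO.mem_toFinset.1 ho
          have hlast : S.getLast hne = F ⟨P.length - 1, by omega⟩ := by
            rw [List.getLast_eq_getElem]
            have : S.length - 1 = P.length - 1 := by omega
            simp only [this]
            exact hget (P.length - 1) (by omega)
          have hlast' : S.dropLast.getLast hne' = F ⟨P.length - 2, by omega⟩ := by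
            rw [List.getLast_eq_getElem, List.getElem_dropLast]
            have : S.dropLast.length - 1 = P.length - 2 := by omega
            simp only [this]
            exact hget (P.length - 2) (by omega)
          refine ⟨?_, ?_, ?_, ?_⟩
          · rw [hlast]; exact ho
          · refine ⟨?_, ?_⟩
            · intro CL hCL
              exact (hOsub o hoO).1 CL (List.dropLast_sublist S |>.mem hCL)
            · exact ((hOsub o hoO).2).prefix (List.dropLast_prefix S)
          · rw [hlast, hlast']
            have hgap := hq2 o hoO (P.length - 2) (by omega)
            have he : P.length - 2 + 1 = P.length - 1 := by omega
            rw [he] at hgap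
            simp only [hF]
            omega
          · rw [hlast, hlast']
            have hgap := hq2 o hoO (P.length - 2) (by omega)
            have he : P.length - 2 + 1 = P.length - 1 := by omega
            rw [he] at hgap
            simp only [hF]
            omega
    refine ⟨S, hclus, hfeas, hmap, fun o ho => hOsub o ho, ?_⟩
    rw [hcore]
    exact hpat
end

section
/- (Lemma 5 of the paper, the root pruning rule, stated with the hypotheses needed by its proof.) Let S be a feasible sequence whose last cluster has position map p_last, and let CL be a cluster with position map p such that CL.O ⊆ λ(S) and 0 < p(o) − p_last(o) ≤ d + 1 for every o ∈ CL.O (so CL is a feasible cluster for S and λ(S ++ [CL]) = CL.O). Let S' = [CL'₁, …, CL'ᵣ] be any cluster sequence with CL'₁ = CL such that every nonempty prefix of S' is a feasible sequence. Then: (1) λ(S ++ S'ⱼ) = λ(S'ⱼ) for every nonempty prefix S'ⱼ of S'; (2) every prefix of S ++ S' that strictly extends S is a feasible sequence; and consequently, if |S'| ≥ k, the pattern ⟨λ(S'), route(S')⟩ is not maximal, since it is dominated by the relaxed co-movement pattern ⟨λ(S ++ S'), route(S ++ S')⟩, which has the same object set and a strictly longer route containing route(S') as a consecutive suffix. -/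
variable {ι C : Type*}

lemma isCore_append {d : ℕ} {L₁ L₂ : List (Cluster ι C)} (h₁ : L₁ ≠ []) (h₂ : L₂ ≠ [])
    (o : ι) :
    IsCore d (L₁ ++ L₂) o ↔
      IsCore d L₁ o ∧ IsCore d L₂ o ∧
      0 < (L₂.head h₂).p o - (L₁.getLast h₁).p o ∧
      (L₂.head h₂).p o - (L₁.getLast h₁).p o ≤ d + 1 := by
  unfold IsCore
  rw [List.Chain', List.isChain_append]
  constructor
  · rintro ⟨hmem, hc₁, hc₂, hlink⟩
    refine ⟨⟨fun X hX => hmem X (by simp [hX]), hc₁⟩,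
      ⟨fun X hX => hmem X (by simp [hX]), hc₂⟩, ?_⟩
    exact hlink _ (List.getLast?_eq_getLast h₁) _ (List.head?_eq_head h₂)
  · rintro ⟨⟨hm₁, hc₁⟩, ⟨hm₂, hc₂⟩, hl⟩
    refine ⟨?_, hc₁, hc₂, ?_⟩
    · intro X hX
      rcases List.mem_append.1 hX with h | h
      exacts [hm₁ X h, hm₂ X h]
    · intro x hx y hy
      rw [List.getLast?_eq_getLast h₁, Option.mem_some_iff] at hx
      rw [List.head?_eq_head h₂, Option.mem_some_iff] at hy
      subst hx; subst hy
      exact hl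

/-- Lemma 5 of the paper (the root pruning rule), with the hypotheses needed by
its proof: if the cluster `CL` satisfies `CL.O ⊆ λ(S)` and the gap condition
w.r.t. the last cluster of the feasible sequence `S` (so `CL` is a feasible
cluster for `S`), then for any cluster sequence `S'` starting with `CL` all of
whose nonempty prefixes are feasible: (1) `λ(S ++ S'ⱼ) = λ(S'ⱼ)` for every
nonempty prefix `S'ⱼ` of `S'`; (2) every prefix of `S ++ S'` strictly extending
`S` is a feasible sequence; and (3) if `|S'| ≥ k`, the pattern
`⟨λ(S'), route(S')⟩` is dominated by the relaxed co-movement pattern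
`⟨λ(S ++ S'), route(S ++ S')⟩`, which has the same object set and a strictly
longer route containing `route(S')` as a consecutive suffix — so
`⟨λ(S'), route(S')⟩` is not maximal. -/
theorem root_pruning_rule {ι C : Type*} (m k d : ℕ) (ε : ℝ) (hε : 0 ≤ ε)
    (len : ι → ℕ) (cam : ι → ℕ → C) (s : ι → ℕ → ℝ)
    (hs : ∀ (o : ι) (i j : ℕ), i < j → j < len o → s o i < s o j)
    (S : List (Cluster ι C)) (hSne : S ≠ [])
    (hSfeas : FeasibleSeq m d S)
    (hSvalid : ∀ X ∈ S, IsCluster m ε len cam s X)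
    (CL : Cluster ι C) (hCL : IsCluster m ε len cam s CL)
    (hsub : (CL.O : Set ι) ⊆ coreSet d S)
    (hgap : ∀ o ∈ CL.O,
      0 < CL.p o - (S.getLast hSne).p o ∧ CL.p o - (S.getLast hSne).p o ≤ d + 1)
    (S' : List (Cluster ι C)) (hS'head : S'.head? = some CL)
    (hS'valid : ∀ X ∈ S', IsCluster m ε len cam s X)
    (hS'prefix : ∀ S₁ : List (Cluster ι C), S₁ ≠ [] → S₁ <+: S' → FeasibleSeq m d S₁) :
    (∀ j : ℕ, 1 ≤ j → j ≤ S'.length →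
      coreSet d (S ++ S'.take j) = coreSet d (S'.take j)) ∧
    (∀ j : ℕ, 1 ≤ j → j ≤ S'.length → FeasibleSeq m d (S ++ S'.take j)) ∧
    (k ≤ S'.length →
      coreSet d (S ++ S') = coreSet d S' ∧
      IsPattern m k d ε len cam s (coreSet d (S ++ S')) ((S ++ S').map Cluster.c) ∧
      coreSet d S' ⊆ coreSet d (S ++ S') ∧
      IsDSubpath d (S'.map Cluster.c) ((S ++ S').map Cluster.c) ∧
      (S'.map Cluster.c) <:+ ((S ++ S').map Cluster.c) ∧
      (S'.map Cluster.c).length < ((S ++ S').map Cluster.c).length) := by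
  -- S' starts with CL
  have hS'ne : S' ≠ [] := by
    intro h; rw [h] at hS'head; simp at hS'head
  obtain ⟨rest, rfl⟩ : ∃ rest, S' = CL :: rest := by
    cases S' with
    | nil => simp at hS'head
    | cons a l =>
      obtain rfl : a = CL := by simpa using hS'head
      exact ⟨l, rfl⟩
  set S' : List (Cluster ι C) := CL :: rest with hS'def
  -- the key coreSet identity
  have key : ∀ T : List (Cluster ι C), (hT : T ≠ []) → T.head hT = CL →
      coreSet d (S ++ T) = coreSet d T := by
    intro T hT hhead
    ext o
    simp only [coreSet, Set.mem_setOf_eq]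
    rw [isCore_append hSne hT]
    constructor
    · rintro ⟨_, h, _⟩; exact h
    · intro h
      have hoCL : o ∈ CL.O := by
        have := h.1 (T.head hT) (List.head_mem hT)
        rwa [hhead] at this
      exact ⟨hsub hoCL, h, by rw [hhead]; exact (hgap o hoCL).1,
        by rw [hhead]; exact (hgap o hoCL).2⟩
  -- heads of nonempty prefixes of S' are CL
  have headpre : ∀ T : List (Cluster ι C), (hT : T ≠ []) → T <+: S' → T.head hT = CL := by
    intro T hT hpre
    obtain ⟨u, hu⟩ := hpre
    cases T with
    | nil => exact absurd rfl hT
    | cons a l =>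
      have h' := congrArg List.head? hu
      rw [hS'head] at h'
      simpa using h'
  have claim1 : ∀ j : ℕ, 1 ≤ j → j ≤ S'.length →
      coreSet d (S ++ S'.take j) = coreSet d (S'.take j) := by
    intro j hj1 hj2
    have hTne : S'.take j ≠ [] := by
      simp [List.take_eq_nil_iff]; omega
    exact key _ hTne (headpre _ hTne (List.take_prefix j S'))
  have claim2 : ∀ j : ℕ, 1 ≤ j → j ≤ S'.length → FeasibleSeq m d (S ++ S'.take j) := by
    intro j hj1 hj2
    rcases eq_or_lt_of_le hj1 with hj | hj
    · -- j = 1 : S ++ [CL]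
      have ht : S'.take j = [CL] := by rw [← hj]; rfl
      rw [ht]
      refine Or.inr ⟨S, CL, rfl, S.getLast hSne, List.getLast?_eq_getLast hSne, CL.O,
        hCL.1, fun o ho => ⟨ho, hsub ho, (hgap o ho).1, (hgap o ho).2⟩⟩
    · -- j ≥ 2
      have hfeas := hS'prefix (S'.take j) (by simp [List.take_eq_nil_iff]; omega)
        (List.take_prefix j S')
      have hlen : (S'.take j).length = j := by simp; omega
      rcases hfeas with ⟨X, hX⟩ | ⟨S₁, CL', hSeq, hFF⟩
      · rw [hX] at hlen; simp at hlen; omega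
      · have hS₁ne : S₁ ≠ [] := by
          intro h; rw [h] at hSeq; rw [hSeq] at hlen; simp at hlen; omega
        have hS₁pre : S₁ <+: S' := List.IsPrefix.trans ⟨[CL'], hSeq.symm⟩ (List.take_prefix j S')
        have hkey := key S₁ hS₁ne (headpre S₁ hS₁ne hS₁pre)
        rw [hSeq, ← List.append_assoc]
        refine Or.inr ⟨S ++ S₁, CL', rfl, ?_⟩
        obtain ⟨CLn, hCLn, T, hTcard, hT⟩ := hFF
        refine ⟨CLn, ?_, T, hTcard, fun o ho => ?_⟩
        · rwa [List.getLast?_append_of_ne_nil S hS₁ne]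
        · obtain ⟨h1, h2, h3, h4⟩ := hT o ho
          refine ⟨h1, ?_, h3, h4⟩
          show o ∈ coreSet d (S ++ S₁)
          rw [hkey]; exact h2
  refine ⟨claim1, claim2, fun hk => ?_⟩
  -- part (3)
  have htake : S'.take S'.length = S' := List.take_length
  have hcore : coreSet d (S ++ S') = coreSet d S' := by
    have := claim1 S'.length (by simp [hS'def]) le_rfl
    rwa [htake] at this
  have hS'len : 1 ≤ S'.length := by simp [hS'def]
  have hSlen : 1 ≤ S.length := List.length_pos_iff.2 hSne
  have hvalid : ∀ X ∈ S ++ S', IsCluster m ε len cam s X := by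
    intro X hX
    rcases List.mem_append.1 hX with h | h
    exacts [hSvalid X h, hS'valid X h]
  -- length facts
  have hLlen : (S ++ S').length = S.length + S'.length := by simp
  -- the pattern
  have hpat : IsPattern m k d ε len cam s (coreSet d (S ++ S')) ((S ++ S').map Cluster.c) := by
    have hCLmem : CL ∈ S ++ S' := by simp [hS'def]
    have hOsub : coreSet d (S ++ S') ⊆ (CL.O : Set ι) := fun o ho => ho.1 CL hCLmem
    have hfin : (coreSet d (S ++ S')).Finite := Set.Finite.subset CL.O.finite_toSet hOsub
    refine ⟨hfin, ?_, ?_, ?_⟩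
    · -- m ≤ ncard : use feasibility of S ++ S'
      have hfeas := claim2 S'.length hS'len le_rfl
      rw [htake] at hfeas
      rcases hfeas with ⟨X, hX⟩ | ⟨S₁, CL', hSeq, hFF⟩
      · have : (S ++ S').length = 1 := by rw [hX]; rfl
        rw [hLlen] at this; omega
      · obtain ⟨CLn, hCLn, T, hTcard, hT⟩ := hFF
        have hS₁ne : S₁ ≠ [] := by
          intro h; rw [h] at hSeq
          have : (S ++ S').length = 1 := by rw [hSeq]; rfl
          rw [hLlen] at this; omega
        have hTsub : (T : Set ι) ⊆ coreSet d (S ++ S') := by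
          intro o ho
          obtain ⟨h1, h2, h3, h4⟩ := hT o ho
          rw [hSeq]
          show IsCore d (S₁ ++ [CL']) o
          rw [isCore_append hS₁ne (by simp) o]
          have hCLn' : CLn = S₁.getLast hS₁ne := by
            rw [List.getLast?_eq_getLast hS₁ne, Option.mem_some_iff] at hCLn
            exact hCLn.symm
          rw [hCLn'] at h3 h4
          exact ⟨h2, ⟨fun X hX => by simpa using (List.mem_singleton.1 hX) ▸ h1, List.isChain_singleton _⟩,
            h3, h4⟩
        calc m ≤ T.card := hTcard
          _ = (T : Set ι).ncard := (Set.ncard_coe_finset T).symm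
          _ ≤ (coreSet d (S ++ S')).ncard := Set.ncard_le_ncard hTsub hfin
    · simp only [List.length_map, hLlen]; omega
    · -- the witnessing positions
      refine ⟨fun o t => ((S ++ S').getD t CL).p o, ?_, ?_, ?_⟩
      · intro o ho t ht
        simp only [List.length_map] at ht
        beta_reduce
        rw [List.getD_eq_getElem _ CL ht]
        have hmem : (S ++ S')[t] ∈ S ++ S' := List.getElem_mem ht
        have hval := hvalid _ hmem
        have hoX : o ∈ (S ++ S')[t].O := ho.1 _ hmem
        obtain ⟨hlt, hc⟩ := hval.2.1 o hoX
        exact ⟨hlt, by rw [hc]; exact (List.getElem_map _).symm⟩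
      · intro o ho t ht
        simp only [List.length_map] at ht
        have hchain := ho.2
        rw [List.Chain', List.isChain_iff_getElem] at hchain
        have := hchain t (by omega)
        beta_reduce
        rw [List.getD_eq_getElem _ CL (by omega : t < (S ++ S').length),
          List.getD_eq_getElem _ CL (by omega : t + 1 < (S ++ S').length)]
        exact ⟨by omega, this.2⟩
      · intro t ht o ho o' ho'
        simp only [List.length_map] at ht
        beta_reduce
        rw [List.getD_eq_getElem _ CL ht]
        have hmem : (S ++ S')[t] ∈ S ++ S' := List.getElem_mem ht
        exact (hvalid _ hmem).2.2 o (ho.1 _ hmem) o' (ho'.1 _ hmem)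
  refine ⟨hcore, hpat, hcore.symm.subset, ?_, ?_, ?_⟩
  · -- d-subpath via shift by S.length
    refine ⟨fun t => S.length + t, ?_, ?_⟩
    · intro t ht
      simp only [List.length_map] at ht ⊢
      refine ⟨by rw [hLlen]; omega, ?_⟩
      rw [List.getElem_map, List.getElem_map,
        List.getElem_append_right (by omega : S.length ≤ S.length + t)]
      congr 2
      omega
    · intro t ht
      constructor <;> (beta_reduce; omega)
  · rw [List.map_append]; exact List.suffix_append _ _
  · simp only [List.length_map, hLlen]; omega
end

section
/- (Lemma 7 of the paper, the dependency pruning rule.) Let S = [CL₁, …, CLₙ] be a feasible sequence and let CL_i and CL_j be feasible clusters for S with position maps p_i and p_j, such that CL_i depends on CL_j: every o ∈ λ(S ++ [CL_i]) satisfies o ∈ λ(S ++ [CL_j]) and p_j(o) < p_i(o). Then: (1) λ(S ++ [CL_i]) ⊆ λ(S ++ [CL_j, CL_i]); (2) S ++ [CL_j] is a feasible sequence and CL_i is a feasible cluster for S ++ [CL_j], so S ++ [CL_j, CL_i] is a feasible sequence whose core-object set contains λ(S ++ [CL_i]) and has at least m elements. Consequently (assuming m ≥ 1, which forces d ≥ 1),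 the candidate pattern ⟨λ(S ++ [CL_i]), route(S ++ [CL_i])⟩ is dominated by ⟨λ(S ++ [CL_j, CL_i]), route(S ++ [CL_j, CL_i])⟩: its object set is contained in the latter's and its route is a d-subpath of the latter's route. -/
variable {ι C : Type*}

/-- Feasible cluster `CL_i` depends on feasible cluster `CL_j` (for the same
feasible sequence `S`): every object `o ∈ λ(S ++ [CL_i])` also satisfies
`o ∈ λ(S ++ [CL_j])` and `p_j(o) < p_i(o)`. -/
def ClusterDependsOn {ι C : Type*} (d : ℕ) (S : List (Cluster ι C))
    (CLi CLj : Cluster ι C) : Prop :=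
  ∀ o ∈ coreSet d (S ++ [CLi]), o ∈ coreSet d (S ++ [CLj]) ∧ CLj.p o < CLi.p o

lemma isCore_append_singleton {ι C : Type*} (d : ℕ) (S : List (Cluster ι C))
    (CL : Cluster ι C) (o : ι) :
    IsCore d (S ++ [CL]) o ↔ IsCore d S o ∧ o ∈ CL.O ∧
      ∀ CLn ∈ S.getLast?, 0 < CL.p o - CLn.p o ∧ CL.p o - CLn.p o ≤ d + 1 := by
  unfold IsCore
  unfold List.Chain'
  rw [List.isChain_append]
  constructor
  · rintro ⟨hmem, h1, _, h3⟩
    refine ⟨⟨fun c hc => hmem c (by simp [hc]), h1⟩, hmem CL (by simp), ?_⟩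
    intro CLn hCLn
    exact h3 CLn hCLn CL (by simp)
  · rintro ⟨⟨hmem, h1⟩, hO, hlast⟩
    refine ⟨?_, h1, by simp, ?_⟩
    · intro c hc
      rcases List.mem_append.mp hc with h | h
      · exact hmem c h
      · simp at h; subst h; exact hO
    · intro x hx y hy
      simp at hy; subst hy
      exact hlast x hx

/-- Lemma 7 of the paper (the dependency pruning rule): if the feasible cluster
`CL_i` depends on the feasible cluster `CL_j` for the feasible sequence `S`, then
(1) `λ(S ++ [CL_i]) ⊆ λ(S ++ [CL_j, CL_i])`; (2) `S ++ [CL_j]` is a feasible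
sequence, `CL_i` is a feasible cluster for `S ++ [CL_j]`, so
`S ++ [CL_j, CL_i]` is a feasible sequence whose core-object set contains
`λ(S ++ [CL_i])` and has at least `m` elements; consequently (assuming `m ≥ 1`),
the candidate pattern `⟨λ(S ++ [CL_i]), route(S ++ [CL_i])⟩` is dominated by
`⟨λ(S ++ [CL_j, CL_i]), route(S ++ [CL_j, CL_i])⟩`: its object set is contained
in the latter's and its route is a `d`-subpath of the latter's route. -/
theorem dependency_pruning_rule {ι C : Type*} (m d : ℕ) (hm : 1 ≤ m)
    (S : List (Cluster ι C)) (hSfeas : FeasibleSeq m d S)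
    (CLi CLj : Cluster ι C)
    (hfi : FeasibleFor m d S CLi) (hfj : FeasibleFor m d S CLj)
    (hdep : ClusterDependsOn d S CLi CLj) :
    coreSet d (S ++ [CLi]) ⊆ coreSet d (S ++ [CLj, CLi]) ∧
    FeasibleSeq m d (S ++ [CLj]) ∧
    FeasibleFor m d (S ++ [CLj]) CLi ∧
    FeasibleSeq m d (S ++ [CLj, CLi]) ∧
    m ≤ (coreSet d (S ++ [CLj, CLi])).ncard ∧
    (1 ≤ d) ∧
    IsDSubpath d ((S ++ [CLi]).map Cluster.c) ((S ++ [CLj, CLi]).map Cluster.c) := by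
  obtain ⟨CLn, hCLn, Ti, hTi, hTiP⟩ := hfi
  -- every object in Ti is a core object of S ++ [CLi]
  have hTcore : ∀ o ∈ Ti, o ∈ coreSet d (S ++ [CLi]) := by
    intro o ho
    obtain ⟨hOi, hcoreS, h1, h2⟩ := hTiP o ho
    show IsCore d (S ++ [CLi]) o
    rw [isCore_append_singleton]
    refine ⟨hcoreS, hOi, ?_⟩
    intro CLn' hCLn'
    rw [hCLn] at hCLn'
    simp at hCLn'
    subst hCLn'
    exact ⟨h1, h2⟩
  -- key facts for a core object of S ++ [CLi]
  have hkey : ∀ o ∈ coreSet d (S ++ [CLi]),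
      o ∈ coreSet d (S ++ [CLj]) ∧ CLn.p o < CLj.p o ∧ CLj.p o < CLi.p o ∧
        CLi.p o - CLn.p o ≤ d + 1 := by
    intro o ho
    obtain ⟨hj, hji⟩ := hdep o ho
    have hi' := (isCore_append_singleton d S CLi o).mp ho
    have hj' := (isCore_append_singleton d S CLj o).mp hj
    obtain ⟨_, _, hlastj⟩ := hj'
    obtain ⟨_, _, hlasti⟩ := hi'
    have hnj := hlastj CLn hCLn
    have hni := hlasti CLn hCLn
    exact ⟨hj, by omega, hji, hni.2⟩
  -- part (1)
  have hsub : coreSet d (S ++ [CLi]) ⊆ coreSet d (S ++ [CLj, CLi]) := by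
    intro o ho
    obtain ⟨hj, h1, h2, h3⟩ := hkey o ho
    have ho' := (isCore_append_singleton d S CLi o).mp ho
    show IsCore d (S ++ [CLj, CLi]) o
    have : S ++ [CLj, CLi] = (S ++ [CLj]) ++ [CLi] := by simp
    rw [this, isCore_append_singleton]
    refine ⟨hj, ho'.2.1, ?_⟩
    intro CLn' hCLn'
    rw [List.getLast?_concat] at hCLn'
    simp at hCLn'
    subst hCLn'
    omega
  -- d ≥ 1
  have hd : 1 ≤ d := by
    have hne : Ti.Nonempty := Finset.card_pos.mp (by omega)
    obtain ⟨o, ho⟩ := hne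
    obtain ⟨_, h1, h2, h3⟩ := hkey o (hTcore o ho)
    omega
  -- FeasibleFor (S ++ [CLj]) CLi
  have hfi' : FeasibleFor m d (S ++ [CLj]) CLi := by
    refine ⟨CLj, by simp [List.getLast?_concat], Ti, hTi, ?_⟩
    intro o ho
    obtain ⟨hOi, _, _, _⟩ := hTiP o ho
    obtain ⟨hj, h1, h2, h3⟩ := hkey o (hTcore o ho)
    exact ⟨hOi, hj, by omega, by omega⟩
  refine ⟨hsub, Or.inr ⟨S, CLj, rfl, hfj⟩, hfi',
    Or.inr ⟨S ++ [CLj], CLi, by simp, hfi'⟩, ?_, hd, ?_⟩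
  · -- cardinality
    have hfin : (coreSet d (S ++ [CLj, CLi])).Finite := by
      apply Set.Finite.subset CLi.O.finite_toSet
      intro o ho
      exact ho.1 CLi (by simp)
    have hsub2 : (Ti : Set ι) ⊆ coreSet d (S ++ [CLj, CLi]) :=
      fun o ho => hsub (hTcore o ho)
    calc m ≤ Ti.card := hTi
      _ = (Ti : Set ι).ncard := (Set.ncard_coe_finset Ti).symm
      _ ≤ _ := Set.ncard_le_ncard hsub2 hfin
  · -- d-subpath
    refine ⟨fun t => if t < S.length then t else t + 1, ?_, ?_⟩
    · intro t ht
      have ht1 : t < S.length + 1 := by simpa using ht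
      have hl2 : (List.map Cluster.c (S ++ [CLj, CLi])).length = S.length + 2 := by
        simp
      by_cases h : t < S.length
      · refine ⟨by simp only [hl2]; simp [h]; omega, ?_⟩
        simp only [if_pos h, List.map_append]
        rw [List.getElem_append_left (by simpa using h),
          List.getElem_append_left (by simpa using h)]
      · have ht' : t = S.length := by omega
        subst ht'
        refine ⟨by simp only [hl2]; simp [h], ?_⟩
        simp only [if_neg h, List.map_append]
        rw [List.getElem_append_right (by simp),
          List.getElem_append_right (by simp)]
        simp
    · intro t ht
      simp only [List.map_append, List.length_append, List.length_map,
        List.length_singleton] at ht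
      have h : t < S.length := by omega
      by_cases h' : t + 1 < S.length <;> simp [h, h'] <;> omega
end
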